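/- arXiv:cs/9907038 — 3 statements merged into one kernel-verified Lean document; each statement's English description precedes it below -/
import Mathlib

section
/- Rice's Theorem, Version I. Let 𝔸 be a collection of subsets of ℕ that is a nonempty proper subset of the class of computably enumerable sets, i.e., there is a code c with W_c ∈ 𝔸 and a code c' with W_{c'} ∉ 𝔸. Then either the halting problem K many-one reduces to the index set I_𝔸 = {c | W_c ∈ 𝔸}, or the complement of K many-one reduces to I_𝔸. -/
set_option maxHeartbeats 1000000


open Nat.Partrec (Code)
open Nat.Partrec.Code

private lemma exists_computable_index (F : Code → ℕ →. ℕ) (hF : Partrec₂ F) :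
    ∃ f : Code → Code, Computable f ∧ ∀ c, eval (f c) = F c := by
  have h1 : Partrec fun n : ℕ =>
      F (Denumerable.ofNat Code n.unpair.1) n.unpair.2 :=
    hF.comp ((Computable.ofNat Code).comp (Computable.fst.comp Computable.unpair))
      (Computable.snd.comp Computable.unpair)
  obtain ⟨e, he⟩ := exists_code.1 (Partrec.nat_iff.1 h1)
  refine ⟨fun c => e.curry (Encodable.encode c),
    (primrec₂_curry.comp (Primrec.const e) Primrec.encode).to_comp, fun c => ?_⟩
  funext x
  rw [eval_curry, he]
  simp

/-- Rice's Theorem, Version I: for any collection 𝔸 of subsets of ℕ that is a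
nonempty proper subset of the class of c.e. sets, either the halting problem K
or its complement many-one reduces to the index set {c | W_c ∈ 𝔸}. -/
theorem rice_version_I (𝔸 : Set (Set ℕ))
    (hnonempty : ∃ c : Code, {n : ℕ | (eval c n).Dom} ∈ 𝔸)
    (hproper : ∃ c' : Code, {n : ℕ | (eval c' n).Dom} ∉ 𝔸) :
    (fun c : Code => (eval c (Encodable.encode c)).Dom) ≤₀
        (fun c : Code => {n : ℕ | (eval c n).Dom} ∈ 𝔸) ∨
    (fun c : Code => ¬ (eval c (Encodable.encode c)).Dom) ≤₀
        (fun c : Code => {n : ℕ | (eval c n).Dom} ∈ 𝔸) := by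
  obtain ⟨c₀, hc₀⟩ := hnonempty
  obtain ⟨c₁, hc₁⟩ := hproper
  -- key construction, for a fixed code d
  have key : ∀ d : Code, ∃ f : Code → Code, Computable f ∧
      ∀ c, {n : ℕ | (eval (f c) n).Dom} =
        {n : ℕ | (eval c (Encodable.encode c)).Dom ∧ (eval d n).Dom} := by
    intro d
    have hF : Partrec₂ fun (c : Code) (n : ℕ) =>
        (eval c (Encodable.encode c)).bind fun _ => eval d n := by
      apply Partrec.bind
      · exact eval_part.comp Computable.fst (Computable.encode.comp Computable.fst)
      · exact eval_part.comp (Computable.const d)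
          (Computable.snd.comp Computable.fst)
    obtain ⟨f, hf, hfe⟩ := exists_computable_index _ hF
    refine ⟨f, hf, fun c => ?_⟩
    ext n
    simp [hfe, Part.bind_dom]
  by_cases hEmpty : (∅ : Set ℕ) ∈ 𝔸
  · right
    obtain ⟨f, hf, hfe⟩ := key c₁
    refine ⟨f, hf, fun c => ?_⟩
    by_cases h : (eval c (Encodable.encode c)).Dom
    · have : {n : ℕ | (eval (f c) n).Dom} = {n : ℕ | (eval c₁ n).Dom} := by
        rw [hfe c]; ext n; simp [h]
      simp [h, this, hc₁]
    · have : {n : ℕ | (eval (f c) n).Dom} = (∅ : Set ℕ) := by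
        rw [hfe c]; ext n; simp [h]
      simp [h, this, hEmpty]
  · left
    obtain ⟨f, hf, hfe⟩ := key c₀
    refine ⟨f, hf, fun c => ?_⟩
    by_cases h : (eval c (Encodable.encode c)).Dom
    · have : {n : ℕ | (eval (f c) n).Dom} = {n : ℕ | (eval c₀ n).Dom} := by
        rw [hfe c]; ext n; simp [h]
      simp [h, this, hc₀]
    · have : {n : ℕ | (eval (f c) n).Dom} = (∅ : Set ℕ) := by
        rw [hfe c]; ext n; simp [h]
      simp [h, this, hEmpty]
end

section
/- Constant-setting lemma (core of the proof of Theorem 5). Let A ⊆ ℕ be infinite with infinite complement, let k ∈ ℕ, and let M : ℕ → Bool be an arbitrary function. Then there exist natural numbers c_0, c_1, …, c_k such that for every j with 0 ≤ j ≤ k, the sum ∑_{i=0}^{j} (j choose i) · c_i lies in A if and only if M(j) = true. -/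
noncomputable def mkc (A : Set ℕ) (hA : A.Infinite) (hAc : Aᶜ.Infinite) (M : ℕ → Bool) :
    ℕ → ℕ
  | j =>
    let s := ∑ i ∈ (Finset.range j).attach, Nat.choose j i.1 * mkc A hA hAc M i.1
    (if M j then (hA.exists_gt s).choose else (hAc.exists_gt s).choose) - s
termination_by j => j
decreasing_by exact Finset.mem_range.mp i.2

lemma mkc_spec (A : Set ℕ) (hA : A.Infinite) (hAc : Aᶜ.Infinite) (M : ℕ → Bool) (j : ℕ) :
    ((∑ i ∈ Finset.range (j + 1), Nat.choose j i * mkc A hA hAc M i) ∈ A ↔ M j = true) := by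
  set c := mkc A hA hAc M with hc
  set s := ∑ i ∈ (Finset.range j).attach, Nat.choose j i.1 * c i.1 with hs
  have hsum : ∑ i ∈ Finset.range (j + 1), Nat.choose j i * c i = s + c j := by
    rw [Finset.sum_range_succ, Nat.choose_self, one_mul, hs]
    congr 1
    exact (Finset.sum_attach _ _).symm
  have hcj : c j = (if M j then (hA.exists_gt s).choose else (hAc.exists_gt s).choose) - s := by
    conv_lhs => rw [hc, mkc]
  cases hM : M j with
  | true =>
      have h := (hA.exists_gt s).choose_spec
      simp only [hM, if_true] at hcj
      have : s + c j = (hA.exists_gt s).choose := by omega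
      simp [hsum, this, h.1]
  | false =>
      have h := (hAc.exists_gt s).choose_spec
      simp only [hM, Bool.false_eq_true, if_false] at hcj
      have : s + c j = (hAc.exists_gt s).choose := by omega
      rw [hsum, this]
      exact iff_of_false h.1 (by simp)

/-- Constant-setting lemma: if `A ⊆ ℕ` is infinite and coinfinite, then for any
`k` and any `M : ℕ → Bool` there are constants `c_0, …, c_k` such that for each
`j ≤ k`, the sum `∑_{i=0}^{j} (j choose i) * c_i` is in `A` iff `M j = true`. -/
theorem constant_setting (A : Set ℕ) (hA : A.Infinite) (hAc : Aᶜ.Infinite)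
    (k : ℕ) (M : ℕ → Bool) :
    ∃ c : ℕ → ℕ, ∀ j ≤ k,
      ((∑ i ∈ Finset.range (j + 1), Nat.choose j i * c i) ∈ A ↔ M j = true) := by
  exact ⟨mkc A hA hAc M, fun j _ => mkc_spec A hA hAc M j⟩
end

section
/- Constant-setting lemma, boundary-event form. Let A ⊆ ℕ be infinite with infinite complement, let k ∈ ℕ, and let M : ℕ → Bool be an arbitrary function. Then there exist natural numbers c_0, …, c_k and a_0, …, a_k such that for every j with 0 ≤ j ≤ k: a_j is a boundary event of A (i.e., a_j ∈ A and a_j + 1 ∉ A), and ∑_{i=0}^{j} (j choose i) · c_i equals a_j if M(j) = true, and equals a_j + 1 if M(j) = false. -/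
lemma exists_boundary (A : Set ℕ) (hA : A.Infinite) (hAc : Aᶜ.Infinite) (N : ℕ) :
    ∃ ℓ, N ≤ ℓ ∧ ℓ ∈ A ∧ ℓ + 1 ∉ A := by
  classical
  obtain ⟨m, hm, hNm⟩ := hA.exists_gt N
  obtain ⟨n, hn, hmn⟩ := hAc.exists_gt m
  have hex : ∃ t, m + 1 + t ∉ A := ⟨n - m - 1, by
    have : m + 1 + (n - m - 1) = n := by omega
    rw [this]; exact hn⟩
  set t0 := Nat.find hex with ht0
  refine ⟨m + t0, by omega, ?_, ?_⟩
  · rcases Nat.eq_zero_or_pos t0 with h | h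
    · simpa [h] using hm
    · have := Nat.find_min hex (m := t0 - 1) (by omega)
      have heq : m + 1 + (t0 - 1) = m + t0 := by omega
      rw [heq] at this
      exact not_not.mp this
  · have := Nat.find_spec hex
    have heq : m + t0 + 1 = m + 1 + t0 := by omega
    rw [heq]; exact this

/-- Constant-setting lemma, boundary-event form: if `A ⊆ ℕ` is infinite and
coinfinite, then for any `k` and any `M : ℕ → Bool` there are constants
`c_0, …, c_k` and boundary events `a_0, …, a_k` of `A` such that for each
`j ≤ k`, the sum `∑_{i=0}^{j} (j choose i) * c_i` equals `a_j` if `M j = true`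
and `a_j + 1` if `M j = false`. -/
theorem constant_setting_boundary (A : Set ℕ) (hA : A.Infinite) (hAc : Aᶜ.Infinite)
    (k : ℕ) (M : ℕ → Bool) :
    ∃ c : ℕ → ℕ, ∃ a : ℕ → ℕ, ∀ j ≤ k,
      (a j ∈ A ∧ a j + 1 ∉ A) ∧
      (∑ i ∈ Finset.range (j + 1), Nat.choose j i * c i) =
        (if M j = true then a j else a j + 1) := by
  induction k with
  | zero =>
    obtain ⟨ℓ, _, hℓA, hℓA'⟩ := exists_boundary A hA hAc 0
    refine ⟨fun _ => if M 0 then ℓ else ℓ + 1, fun _ => ℓ, ?_⟩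
    intro j hj
    interval_cases j
    refine ⟨⟨hℓA, hℓA'⟩, ?_⟩
    simp
  | succ k ih =>
    obtain ⟨c, a, hca⟩ := ih
    set S := ∑ i ∈ Finset.range (k + 1), Nat.choose (k + 1) i * c i with hS
    obtain ⟨ℓ, hSℓ, hℓA, hℓA'⟩ := exists_boundary A hA hAc S
    refine ⟨Function.update c (k + 1) ((if M (k + 1) then ℓ else ℓ + 1) - S),
      Function.update a (k + 1) ℓ, ?_⟩
    intro j hj
    rcases Nat.lt_or_ge j (k + 1) with h | h
    · have hj' : j ≤ k := by omega
      obtain ⟨h1, h2⟩ := hca j hj'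
      refine ⟨by simpa [Function.update_of_ne (by omega : j ≠ k + 1)] using h1, ?_⟩
      rw [Function.update_of_ne (by omega : j ≠ k + 1), ← h2]
      apply Finset.sum_congr rfl
      intro i hi
      simp only [Finset.mem_range] at hi
      rw [Function.update_of_ne (by omega : i ≠ k + 1)]
    · have hjeq : j = k + 1 := by omega
      subst hjeq
      refine ⟨by simp [hℓA, hℓA'], ?_⟩
      rw [Finset.sum_range_succ]
      have h1 : ∑ i ∈ Finset.range (k + 1),
          Nat.choose (k + 1) i * Function.update c (k + 1)
            ((if M (k + 1) then ℓ else ℓ + 1) - S) i = S := by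
        rw [hS]
        apply Finset.sum_congr rfl
        intro i hi
        simp only [Finset.mem_range] at hi
        rw [Function.update_of_ne (by omega : i ≠ k + 1)]
      rw [h1]
      simp only [Nat.choose_self, one_mul, Function.update_self]
      have : S ≤ (if M (k + 1) then ℓ else ℓ + 1) := by
        split <;> omega
      split <;> omega
end
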